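/- Let n ≥ 3 be an integer and ε ∈ (0,1) with (1−ε)⁴ > (n−2)/n. Let D > 0 and let f : [0,D] → ℝ be twice continuously differentiable with f(0) = 0, f(D) = 0, f'(0) = 1, f'(D) = −1, f(s) > 0 for all s ∈ (0,D), and f''(s) ≤ 0 for all s ∈ [0,D]. Suppose that for every s ∈ (0,D) one has (n−1)(n−2)·(1−f'(s)²)/f(s)² − 2(n−1)·f''(s)/f(s) ≥ n(n−1)(1−ε)², and that sup_{s∈[0,D]} f(s) ≥ 1−ε. Then there exists exactly one s₀ ∈ (0,D) with f'(s₀) = 0, and moreover f''(s₀) < 0. -/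
import Mathlib


/-- Ricci-nonnegative version of the uniqueness lemma for the minimal leaf of the
canonical sweepout, with the MinA bound replaced by a width bound (`max f ≥ 1 - ε`). -/
theorem unique_minimal_leaf_ricci (n : ℕ) (hn : 3 ≤ n) (ε : ℝ) (hε : ε ∈ Set.Ioo (0 : ℝ) 1)
    (hεn : ((n : ℝ) - 2) / (n : ℝ) < (1 - ε) ^ 4)
    (D : ℝ) (hD : 0 < D) (f f' f'' : ℝ → ℝ)
    (hderiv1 : ∀ s ∈ Set.Icc (0 : ℝ) D, HasDerivWithinAt f (f' s) (Set.Icc (0 : ℝ) D) s)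
    (hderiv2 : ∀ s ∈ Set.Icc (0 : ℝ) D, HasDerivWithinAt f' (f'' s) (Set.Icc (0 : ℝ) D) s)
    (hcont : ContinuousOn f'' (Set.Icc (0 : ℝ) D))
    (hf0 : f 0 = 0) (hfD : f D = 0) (hf'0 : f' 0 = 1) (hf'D : f' D = -1)
    (hpos : ∀ s ∈ Set.Ioo (0 : ℝ) D, 0 < f s)
    (hconc : ∀ s ∈ Set.Icc (0 : ℝ) D, f'' s ≤ 0)
    (hscal : ∀ s ∈ Set.Ioo (0 : ℝ) D,
      (n : ℝ) * ((n : ℝ) - 1) * (1 - ε) ^ 2 ≤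
        ((n : ℝ) - 1) * ((n : ℝ) - 2) * (1 - (f' s) ^ 2) / (f s) ^ 2
          - 2 * ((n : ℝ) - 1) * (f'' s) / (f s))
    (hsup : 1 - ε ≤ sSup (f '' Set.Icc (0 : ℝ) D)) :
    ∃ s₀ ∈ Set.Ioo (0 : ℝ) D, f' s₀ = 0 ∧ f'' s₀ < 0 ∧
      ∀ s ∈ Set.Ioo (0 : ℝ) D, f' s = 0 → s = s₀ := by
  have hε1 : 0 < 1 - ε := by linarith [hε.2]
  have hn3 : (3 : ℝ) ≤ (n : ℝ) := by exact_mod_cast hn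
  have hfc : ContinuousOn f (Set.Icc 0 D) := fun s hs => (hderiv1 s hs).continuousWithinAt
  have hf'c : ContinuousOn f' (Set.Icc 0 D) := fun s hs => (hderiv2 s hs).continuousWithinAt
  have h0mem : (0 : ℝ) ∈ Set.Icc (0 : ℝ) D := Set.left_mem_Icc.2 hD.le
  obtain ⟨s₀, hs₀S, hmax⟩ := isCompact_Icc.exists_isMaxOn ⟨0, h0mem⟩ hfc
  have hfs₀ : 1 - ε ≤ f s₀ := by
    refine le_trans hsup (csSup_le ⟨f 0, 0, h0mem, rfl⟩ ?_)
    rintro y ⟨x, hx, rfl⟩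
    exact hmax hx
  have hs₀Ioo : s₀ ∈ Set.Ioo (0 : ℝ) D := by
    constructor
    · rcases eq_or_lt_of_le hs₀S.1 with h | h
      · exact absurd hfs₀ (by rw [← h, hf0]; linarith)
      · exact h
    · rcases eq_or_lt_of_le hs₀S.2 with h | h
      · exact absurd hfs₀ (by rw [h, hfD]; linarith)
      · exact h
  have hnhds : Set.Icc (0 : ℝ) D ∈ nhds s₀ := Icc_mem_nhds hs₀Ioo.1 hs₀Ioo.2
  have hdA : HasDerivAt f (f' s₀) s₀ := (hderiv1 s₀ hs₀S).hasDerivAt hnhds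
  have hf's₀ : f' s₀ = 0 := (hmax.isLocalMax hnhds).hasDerivAt_eq_zero hdA
  have hfpos : 0 < f s₀ := hpos s₀ hs₀Ioo
  -- f'' s₀ < 0
  have hf''s₀ : f'' s₀ < 0 := by
    rcases lt_or_eq_of_le (hconc s₀ hs₀S) with h | h
    · exact h
    · exfalso
      have hsc := hscal s₀ hs₀Ioo
      rw [hf's₀, h] at hsc
      have hsc' : (n : ℝ) * ((n : ℝ) - 1) * (1 - ε) ^ 2 ≤
          ((n : ℝ) - 1) * ((n : ℝ) - 2) / (f s₀) ^ 2 := by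
        have e : ((n : ℝ) - 1) * ((n : ℝ) - 2) * (1 - (0:ℝ) ^ 2) / (f s₀) ^ 2
            - 2 * ((n : ℝ) - 1) * (0:ℝ) / (f s₀)
            = ((n : ℝ) - 1) * ((n : ℝ) - 2) / (f s₀) ^ 2 := by ring
        rwa [e] at hsc
      have hkey : (n : ℝ) * ((n : ℝ) - 1) * (1 - ε) ^ 2 * (f s₀) ^ 2 ≤
          ((n : ℝ) - 1) * ((n : ℝ) - 2) := (le_div_iff₀ (by positivity)).mp hsc'
      have hεn' : (n : ℝ) - 2 < (n : ℝ) * (1 - ε) ^ 4 := by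
        rw [div_lt_iff₀ (by linarith : (0:ℝ) < (n:ℝ))] at hεn
        linarith
      have hF2 : (1 - ε) ^ 2 ≤ (f s₀) ^ 2 := by nlinarith
      have h1 : (n : ℝ) * ((n : ℝ) - 1) * (1 - ε) ^ 2 * (1 - ε) ^ 2 ≤
          (n : ℝ) * ((n : ℝ) - 1) * (1 - ε) ^ 2 * (f s₀) ^ 2 :=
        mul_le_mul_of_nonneg_left hF2 (by nlinarith [sq_nonneg (1 - ε)])
      have h2 : ((n : ℝ) - 1) * ((n : ℝ) - 2) < ((n : ℝ) - 1) * ((n : ℝ) * (1 - ε) ^ 4) :=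
        mul_lt_mul_of_pos_left hεn' (by linarith)
      nlinarith
  -- f' is antitone
  have hanti : AntitoneOn f' (Set.Icc 0 D) := by
    apply antitoneOn_of_deriv_nonpos (convex_Icc 0 D) hf'c
    · intro x hx
      rw [interior_Icc] at hx
      exact (((hderiv2 x (Set.Ioo_subset_Icc_self hx)).hasDerivAt
        (Icc_mem_nhds hx.1 hx.2)).differentiableAt).differentiableWithinAt
    · intro x hx
      rw [interior_Icc] at hx
      have := ((hderiv2 x (Set.Ioo_subset_Icc_self hx)).hasDerivAt
        (Icc_mem_nhds hx.1 hx.2)).deriv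
      rw [this]
      exact hconc x (Set.Ioo_subset_Icc_self hx)
  refine ⟨s₀, hs₀Ioo, hf's₀, hf''s₀, ?_⟩
  intro s hs hfs'
  by_contra hne
  rcases lt_or_gt_of_ne hne with hlt | hgt
  · -- s < s₀ : f' vanishes on [s, s₀], so f'' s₀ = 0, contradiction
    have hzero : ∀ t ∈ Set.Icc s s₀, f' t = 0 := by
      intro t ht
      have hts : t ∈ Set.Icc (0:ℝ) D := ⟨le_trans hs.1.le ht.1, le_trans ht.2 hs₀S.2⟩
      have h1 : f' t ≤ 0 := by
        have := hanti ⟨hs.1.le, hs.2.le⟩ hts ht.1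
        rwa [hfs'] at this
      have h2 : 0 ≤ f' t := by
        have := hanti hts hs₀S ht.2
        rwa [hf's₀] at this
      linarith
    have hsub : Set.Icc s s₀ ⊆ Set.Icc (0:ℝ) D := Set.Icc_subset_Icc hs.1.le hs₀S.2
    have hmem : s₀ ∈ Set.Icc s s₀ := Set.right_mem_Icc.2 hlt.le
    have hud : UniqueDiffWithinAt ℝ (Set.Icc s s₀) s₀ := uniqueDiffOn_Icc hlt s₀ hmem
    have h1 : HasDerivWithinAt f' (f'' s₀) (Set.Icc s s₀) s₀ := (hderiv2 s₀ hs₀S).mono hsub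
    have h2 : HasDerivWithinAt f' 0 (Set.Icc s s₀) s₀ :=
      (hasDerivWithinAt_const s₀ (Set.Icc s s₀) (0:ℝ)).congr hzero (hzero s₀ hmem)
    have hu := h1.derivWithin hud
    rw [h2.derivWithin hud] at hu
    rw [← hu] at hf''s₀
    exact lt_irrefl 0 hf''s₀
  · -- s₀ < s : f' vanishes on [s₀, s]
    have hzero : ∀ t ∈ Set.Icc s₀ s, f' t = 0 := by
      intro t ht
      have hts : t ∈ Set.Icc (0:ℝ) D := ⟨le_trans hs₀S.1 ht.1, le_trans ht.2 hs.2.le⟩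
      have h1 : f' t ≤ 0 := by
        have := hanti hs₀S hts ht.1
        rwa [hf's₀] at this
      have h2 : 0 ≤ f' t := by
        have := hanti hts ⟨hs.1.le, hs.2.le⟩ ht.2
        rwa [hfs'] at this
      linarith
    have hsub : Set.Icc s₀ s ⊆ Set.Icc (0:ℝ) D := Set.Icc_subset_Icc hs₀S.1 hs.2.le
    have hmem : s₀ ∈ Set.Icc s₀ s := Set.left_mem_Icc.2 hgt.le
    have hud : UniqueDiffWithinAt ℝ (Set.Icc s₀ s) s₀ := uniqueDiffOn_Icc hgt s₀ hmem
    have h1 : HasDerivWithinAt f' (f'' s₀) (Set.Icc s₀ s) s₀ := (hderiv2 s₀ hs₀S).mono hsub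
    have h2 : HasDerivWithinAt f' 0 (Set.Icc s₀ s) s₀ :=
      (hasDerivWithinAt_const s₀ (Set.Icc s₀ s) (0:ℝ)).congr hzero (hzero s₀ hmem)
    have hu := h1.derivWithin hud
    rw [h2.derivWithin hud] at hu
    rw [← hu] at hf''s₀
    exact lt_irrefl 0 hf''s₀
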